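/- Let a = {a_n} be a positive non-increasing sequence with ∑ a_n = 1 and suppose 2 < inf_n s_n(a)/s_{n+1}(a) ≤ sup_n s_n(a)/s_{n+1}(a) < ∞. Then the sequence a is doubling: there exists c > 0 such that a_n ≤ c·a_{2n} for all n. -/

import Mathlib

open Filter Set Topology

/-- Number of closed balls of radius `δ` needed to cover `F`. -/
noncomputable def coverNum (F : Set ℝ) (δ : ℝ) : ℕ :=
  sInf {n : ℕ | ∃ S : Finset ℝ, S.card = n ∧ F ⊆ ⋃ x ∈ S, Metric.closedBall x δ}

/-- Upper box-counting dimension. -/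
noncomputable def upperBoxDim (F : Set ℝ) : ℝ :=
  limsup (fun δ : ℝ => Real.log (coverNum F δ) / -Real.log δ) (nhdsWithin 0 (Set.Ioi 0))

/-- Lower box-counting dimension. -/
noncomputable def lowerBoxDim (F : Set ℝ) : ℝ :=
  liminf (fun δ : ℝ => Real.log (coverNum F δ) / -Real.log δ) (nhdsWithin 0 (Set.Ioi 0))

/-- Assouad dimension. -/
noncomputable def assouadDim (E : Set ℝ) : ℝ :=
  sInf {α : ℝ | ∃ c > (0:ℝ), ∃ ρ > (0:ℝ), ∀ x ∈ E, ∀ r R : ℝ, 0 < r → r < R → R < ρ →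
    (coverNum (Metric.ball x R ∩ E) r : ℝ) ≤ c * (R / r) ^ α}

/-- Lower (Assouad) dimension. -/
noncomputable def lowerAssouadDim (E : Set ℝ) : ℝ :=
  sSup {α : ℝ | ∃ c > (0:ℝ), ∃ ρ > (0:ℝ), ∀ x ∈ E, ∀ r R : ℝ, 0 < r → r < R → R < ρ →
    c * (R / r) ^ α ≤ (coverNum (Metric.ball x R ∩ E) r : ℝ)}

/-- Upper θ-intermediate dimension (with the convention that at θ = 0 it is the
Hausdorff dimension). -/
noncomputable def upperIntDim (θ : ℝ) (F : Set ℝ) : ℝ :=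
  if θ = 0 then (dimH F).toReal else
  sInf {s : ℝ | 0 ≤ s ∧ ∀ ε > (0:ℝ), ∃ δ₀ > (0:ℝ), ∀ δ : ℝ, 0 < δ → δ ≤ δ₀ →
    ∃ (I : Finset ℕ) (U : ℕ → Set ℝ), (F ⊆ ⋃ i ∈ I, U i) ∧
      (∀ i ∈ I, δ ^ (1 / θ) ≤ Metric.diam (U i) ∧ Metric.diam (U i) ≤ δ) ∧
      ∑ i ∈ I, Metric.diam (U i) ^ s ≤ ε}

/-- Lower θ-intermediate dimension (with the convention that at θ = 0 it is the
Hausdorff dimension). -/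
noncomputable def lowerIntDim (θ : ℝ) (F : Set ℝ) : ℝ :=
  if θ = 0 then (dimH F).toReal else
  sInf {s : ℝ | 0 ≤ s ∧ ∀ ε > (0:ℝ), ∀ δ₀ > (0:ℝ), ∃ δ : ℝ, 0 < δ ∧ δ ≤ δ₀ ∧
    ∃ (I : Finset ℕ) (U : ℕ → Set ℝ), (F ⊆ ⋃ i ∈ I, U i) ∧
      (∀ i ∈ I, δ ^ (1 / θ) ≤ Metric.diam (U i) ∧ Metric.diam (U i) ≤ δ) ∧
      ∑ i ∈ I, Metric.diam (U i) ^ s ≤ ε}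

/-- tails `x_n = ∑_{i=n}^∞ a_i` (the sequence `a` is indexed from 1;
the value `a 0` is irrelevant). -/
noncomputable def xseq (a : ℕ → ℝ) (n : ℕ) : ℝ := ∑' i : ℕ, a (n + i)

/-- `s_n = 2^{-n} x_{2^n}`. -/
noncomputable def sseq (a : ℕ → ℝ) (n : ℕ) : ℝ := xseq a (2 ^ n) / 2 ^ n

/-- `r_n = 2^{-n} ∑_{i=2^n}^{2^{n+1}-1} a_i`. -/
noncomputable def rseq (a : ℕ → ℝ) (n : ℕ) : ℝ :=
  (∑ i ∈ Finset.range (2 ^ n), a (2 ^ n + i)) / 2 ^ n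

/-- The countable complementary set `D_a = {x_k : k ≥ 1} ∪ {0}`. -/
noncomputable def Da (a : ℕ → ℝ) : Set ℝ := {0} ∪ {y : ℝ | ∃ k ≥ 1, y = xseq a k}

/-- Length of the interval corresponding to node `m` (in binary-tree indexing, root `1`)
in the construction of the decreasing Cantor set: the sum of the gaps in the subtree of `m`. -/
noncomputable def clen (a : ℕ → ℝ) (m : ℕ) : ℝ :=
  ∑' k : ℕ, ∑ i ∈ Finset.range (2 ^ k), a (2 ^ k * m + i)

/-- Left endpoint of the interval corresponding to node `m`. -/
noncomputable def lft (a : ℕ → ℝ) : ℕ → ℝ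
  | 0 => 0
  | 1 => 0
  | n + 2 =>
    if (n + 2) % 2 = 0 then lft a ((n + 2) / 2)
    else lft a ((n + 2) / 2) + clen a (n + 1) + a ((n + 2) / 2)
termination_by n => n
decreasing_by all_goals omega

/-- The closed interval corresponding to node `m`:  node `2^n + j - 1` is the
interval `I_{n,j}` of step `n`, for `1 ≤ j ≤ 2^n`. -/
noncomputable def node (a : ℕ → ℝ) (m : ℕ) : Set ℝ := Set.Icc (lft a m) (lft a m + clen a m)

/-- The decreasing Cantor set `C_a` associated with the sequence `a`. -/
noncomputable def cantorSetOf (a : ℕ → ℝ) : Set ℝ :=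
  ⋂ n : ℕ, ⋃ j ∈ Finset.Icc 1 (2 ^ n), node a (2 ^ n + j - 1)

/-- `E` is a complementary set of the sequence `a`: a closed subset of `[0,1]`
whose complement in `[0,1]` is a disjoint union of open intervals of lengths `a_1, a_2, …`. -/
def IsComplSet (a : ℕ → ℝ) (E : Set ℝ) : Prop :=
  ∃ g : ℕ → ℝ,
    (∀ n ≥ 1, Set.Ioo (g n) (g n + a n) ⊆ Set.Icc 0 1) ∧
    (∀ m ≥ 1, ∀ n ≥ 1, m ≠ n →
      Disjoint (Set.Ioo (g m) (g m + a m)) (Set.Ioo (g n) (g n + a n))) ∧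
    E = Set.Icc 0 1 \ ⋃ n ∈ {k : ℕ | 1 ≤ k}, Set.Ioo (g n) (g n + a n)

/-- `γ_{θ,a}(r) = max{ m : s_m ≥ s_r^{1/θ} }`. -/
noncomputable def gammaIdx (a : ℕ → ℝ) (θ : ℝ) (r : ℕ) : ℕ :=
  sSup {m : ℕ | sseq a r ^ (1 / θ) ≤ sseq a m}

/-- If `2 < inf_n s_n/s_{n+1} ≤ sup_n s_n/s_{n+1} < ∞`, then `a` is doubling. -/
theorem doubling_of_ratio_bounds (a : ℕ → ℝ) (hpos : ∀ n ≥ 1, 0 < a n) (hmono : ∀ n ≥ 1, a (n + 1) ≤ a n)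
    (hsumm : Summable fun n => a (n + 1)) (htot : ∑' n : ℕ, a (n + 1) = 1)
    (hinf : ∃ ε > (0:ℝ), ∀ n : ℕ, 2 + ε ≤ sseq a n / sseq a (n + 1))
    (hsup : ∃ M : ℝ, ∀ n : ℕ, sseq a n / sseq a (n + 1) ≤ M) :
    ∃ c > (0:ℝ), ∀ n ≥ 1, a n ≤ c * a (2 * n) := by
  obtain ⟨ε, hε, hinf⟩ := hinf
  obtain ⟨M, hsup⟩ := hsup
  -- antitonicity on [1, ∞)
  have anti : ∀ m n : ℕ, 1 ≤ m → m ≤ n → a n ≤ a m := by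
    intro m n hm hmn
    induction n, hmn using Nat.le_induction with
    | base => exact le_refl _
    | succ n hn ih => exact le_trans (hmono n (le_trans hm hn)) ih
  -- summability of tails
  have hsum' : ∀ n : ℕ, 1 ≤ n → Summable fun i => a (n + i) := by
    intro n hn
    have h := (summable_nat_add_iff (f := fun k => a (k + 1)) (n - 1)).mpr hsumm
    exact h.congr fun i => by congr 1; omega
  -- positivity of tails
  have xpos : ∀ n : ℕ, 1 ≤ n → 0 < xseq a n := by
    intro n hn
    have h := Summable.le_tsum (hsum' n hn) 0 (fun j _ => (hpos (n + j) (by omega)).le)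
    have h0 : 0 < a (n + 0) := hpos _ (by omega)
    exact lt_of_lt_of_le h0 h
  have spos : ∀ m : ℕ, 0 < sseq a m := fun m =>
    div_pos (xpos _ Nat.one_le_two_pow) (pow_pos two_pos m)
  -- tail splitting
  have Tsplit : ∀ n : ℕ, xseq a (2 ^ n) =
      (∑ i ∈ Finset.range (2 ^ n), a (2 ^ n + i)) + xseq a (2 ^ (n + 1)) := by
    intro n
    have hs := hsum' (2 ^ n) Nat.one_le_two_pow
    have h := Summable.sum_add_tsum_nat_add (f := fun i => a (2 ^ n + i)) (2 ^ n) hs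
    have hpow : (2 : ℕ) ^ (n + 1) = 2 ^ n + 2 ^ n := by rw [pow_succ]; ring
    have h2 : (∑' i : ℕ, a (2 ^ n + (i + 2 ^ n))) = xseq a (2 ^ (n + 1)) := by
      unfold xseq
      exact tsum_congr fun i => by congr 1; omega
    rw [h2] at h
    exact (h.symm : xseq a (2 ^ n) = _)
  -- key relation : Tn = 2^n (s_n - 2 s_{n+1})
  have hr : ∀ n : ℕ, (∑ i ∈ Finset.range (2 ^ n), a (2 ^ n + i)) =
      2 ^ n * (sseq a n - 2 * sseq a (n + 1)) := by
    intro n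
    have h := Tsplit n
    have hx : xseq a (2 ^ n) = sseq a n * 2 ^ n := by
      unfold sseq
      field_simp
    have hx' : xseq a (2 ^ (n + 1)) = sseq a (n + 1) * 2 ^ (n + 1) := by
      unfold sseq
      field_simp
    rw [hx, hx'] at h
    have : (2 : ℝ) ^ (n + 1) = 2 * 2 ^ n := by ring
    rw [this] at h
    linarith
  -- sum bounds
  have hA : ∀ n : ℕ, (∑ i ∈ Finset.range (2 ^ n), a (2 ^ n + i)) ≤ 2 ^ n * a (2 ^ n) := by
    intro n
    calc (∑ i ∈ Finset.range (2 ^ n), a (2 ^ n + i))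
        ≤ ∑ _i ∈ Finset.range (2 ^ n), a (2 ^ n) := by
          refine Finset.sum_le_sum fun i _ => anti (2 ^ n) (2 ^ n + i) Nat.one_le_two_pow (by omega)
      _ = 2 ^ n * a (2 ^ n) := by
          rw [Finset.sum_const, Finset.card_range, nsmul_eq_mul]; push_cast; ring
  have hB : ∀ n : ℕ, (2 : ℝ) ^ n * a (2 ^ (n + 1)) ≤
      ∑ i ∈ Finset.range (2 ^ n), a (2 ^ n + i) := by
    intro n
    have hpow : (2 : ℕ) ^ (n + 1) = 2 ^ n + 2 ^ n := by rw [pow_succ]; ring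
    calc (2 : ℝ) ^ n * a (2 ^ (n + 1))
        = ∑ _i ∈ Finset.range (2 ^ n), a (2 ^ (n + 1)) := by
          rw [Finset.sum_const, Finset.card_range, nsmul_eq_mul]; push_cast; ring
      _ ≤ ∑ i ∈ Finset.range (2 ^ n), a (2 ^ n + i) := by
          refine Finset.sum_le_sum fun i hi => ?_
          have hi' : i < 2 ^ n := Finset.mem_range.mp hi
          exact anti (2 ^ n + i) (2 ^ (n + 1)) (by omega) (by omega)
  -- step bound from hinf : s_n - 2 s_{n+1} ≥ ε s_{n+1}
  have hstepinf : ∀ n : ℕ, ε * sseq a (n + 1) ≤ sseq a n - 2 * sseq a (n + 1) := by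
    intro n
    have h := hinf n
    have hs := spos (n + 1)
    rw [le_div_iff₀ hs] at h
    nlinarith
  -- key1 : a (2^(n+1)) ≤ s_n
  have key1 : ∀ n : ℕ, a (2 ^ (n + 1)) ≤ sseq a n := by
    intro n
    have h := le_trans (hB n) (le_of_eq (hr n))
    have hs := spos (n + 1)
    have h2 : (0 : ℝ) < (2 : ℝ) ^ n := by positivity
    nlinarith
  -- key2 : ε s_{n+1} ≤ a (2^n)
  have key2 : ∀ n : ℕ, ε * sseq a (n + 1) ≤ a (2 ^ n) := by
    intro n
    have h := le_trans (le_of_eq (hr n).symm) (hA n)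
    have h2 : (0 : ℝ) < (2 : ℝ) ^ n := by positivity
    have h3 := hstepinf n
    nlinarith
  -- M is positive
  have hM0 : (0 : ℝ) < M :=
    lt_of_lt_of_le (show (0 : ℝ) < 2 + ε by linarith) (le_trans (hinf 0) (hsup 0))
  -- one ratio step
  have hstep : ∀ k : ℕ, sseq a k ≤ M * sseq a (k + 1) := by
    intro k
    have h := hsup k
    rwa [div_le_iff₀ (spos (k + 1))] at h
  -- four ratio steps
  have hchain : ∀ k : ℕ, sseq a k ≤ M ^ 4 * sseq a (k + 4) := by
    intro k
    have h1 := hstep k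
    have h2 := hstep (k + 1)
    have h3 := hstep (k + 2)
    have h4 := hstep (k + 3)
    have : k + 1 + 1 = k + 2 := rfl
    nlinarith [spos (k + 1), spos (k + 2), spos (k + 3), spos (k + 4),
      mul_le_mul_of_nonneg_left h2 hM0.le,
      mul_le_mul_of_nonneg_left h3 (by positivity : (0:ℝ) ≤ M * M),
      mul_le_mul_of_nonneg_left h4 (by positivity : (0:ℝ) ≤ M * M * M)]
  -- final constant
  have ha1 := hpos 1 le_rfl
  have ha2 := hpos 2 (by omega)
  refine ⟨M ^ 4 / ε + a 1 / a 2, add_pos (by positivity) (div_pos ha1 ha2), ?_⟩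
  intro n hn
  rcases eq_or_lt_of_le hn with h1 | h2
  · -- n = 1
    have hn1 : n = 1 := h1.symm
    subst hn1
    have : a 1 / a 2 * a 2 = a 1 := div_mul_cancel₀ _ ha2.ne'
    have hM4 : (0 : ℝ) ≤ M ^ 4 / ε := by positivity
    have h2pos := hpos 2 (by omega)
    nlinarith
  · -- n ≥ 2
    have hn2 : 2 ≤ n := h2
    set k := Nat.log 2 n with hk
    have hk1 : 2 ^ k ≤ n := Nat.pow_log_le_self 2 (by omega)
    have hk2 : n < 2 ^ (k + 1) := Nat.lt_pow_succ_log_self (by norm_num) n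
    have hkpos : 1 ≤ k := by
      by_contra h
      have : k = 0 := by omega
      rw [this] at hk2
      simp at hk2
      omega
    have e1 : a n ≤ a (2 ^ k) := anti (2 ^ k) n Nat.one_le_two_pow hk1
    have e2 : a (2 ^ k) ≤ sseq a (k - 1) := by
      have h := key1 (k - 1)
      have : k - 1 + 1 = k := by omega
      rwa [this] at h
    have e3 : sseq a (k - 1) ≤ M ^ 4 * sseq a (k + 3) := by
      have h := hchain (k - 1)
      have : k - 1 + 4 = k + 3 := by omega
      rwa [this] at h
    have e4 : ε * sseq a (k + 3) ≤ a (2 ^ (k + 2)) := key2 (k + 2)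
    have e5 : a (2 ^ (k + 2)) ≤ a (2 * n) := by
      have hpow : (2 : ℕ) ^ (k + 2) = 2 * 2 ^ (k + 1) := by rw [pow_succ]; ring
      exact anti (2 * n) (2 ^ (k + 2)) (by omega) (by omega)
    have hs3 := spos (k + 3)
    have h2n := hpos (2 * n) (by omega)
    have hfrac : (0 : ℝ) ≤ a 1 / a 2 := by positivity
    have hmain : a n ≤ M ^ 4 / ε * a (2 * n) := by
      have heq : M ^ 4 * sseq a (k + 3) = M ^ 4 / ε * (ε * sseq a (k + 3)) := by
        field_simp
      have : a n ≤ M ^ 4 / ε * (ε * sseq a (k + 3)) := by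
        rw [← heq]; exact le_trans e1 (le_trans e2 e3)
      refine le_trans this ?_
      exact mul_le_mul_of_nonneg_left (le_trans e4 e5) (by positivity)
    nlinarith
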